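/- Let (S, ⋆, n) be a symmetric composition algebra over F and let L = F×F×F with ρ(ℓ₁,ℓ₂,ℓ₃) = (ℓ₂,ℓ₃,ℓ₁). On V = S×S×S define (x₁,x₂,x₃)*(y₁,y₂,y₃) = (x₂⋆y₃, x₃⋆y₁, x₁⋆y₂) and Q = (n,n,n). Then (V, L, ρ, *, Q) is a cyclic composition algebra over (L, ρ). -/

import Mathlib

/-- A cyclic composition algebra over `(L, ρ)`: a module `V` over `L` (the scalar
action recorded as `smul`) with an `L`-valued nonsingular quadratic form `Q`
(with polar form `bQ`) and an `F`-bilinear product `mul` which is `ρ`-semilinear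
in the first variable and `ρ²`-semilinear in the second, satisfying
`Q(x*y) = ρ(Q x) ρ²(Q y)` and `b_Q(x*y,z) = ρ(b_Q(y*z,x)) = ρ²(b_Q(z*x,y))`. -/
structure CyclicComp (F : Type*) [Field F] (L : Type*) [CommRing L] [Algebra F L]
    (V : Type*) [AddCommGroup V] where
  ρ : L ≃ₐ[F] L
  rho_cube : ∀ ℓ : L, ρ (ρ (ρ ℓ)) = ℓ
  smul : L → V → V
  smul_add : ∀ (ℓ : L) (x y : V), smul ℓ (x + y) = smul ℓ x + smul ℓ y
  add_smul : ∀ (ℓ m : L) (x : V), smul (ℓ + m) x = smul ℓ x + smul m x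
  mul_smul : ∀ (ℓ m : L) (x : V), smul (ℓ * m) x = smul ℓ (smul m x)
  one_smul : ∀ x : V, smul 1 x = x
  mul : V → V → V
  mul_add_left : ∀ x y z : V, mul (x + y) z = mul x z + mul y z
  mul_add_right : ∀ x y z : V, mul x (y + z) = mul x y + mul x z
  mul_smul_left : ∀ (ℓ : L) (x y : V), mul (smul ℓ x) y = smul (ρ ℓ) (mul x y)
  mul_smul_right : ∀ (ℓ : L) (x y : V), mul x (smul ℓ y) = smul (ρ (ρ ℓ)) (mul x y)
  Q : V → L
  bQ : V → V → L
  bQ_def : ∀ x y : V, bQ x y = Q (x + y) - Q x - Q y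
  Q_smul : ∀ (ℓ : L) (x : V), Q (smul ℓ x) = ℓ ^ 2 * Q x
  bQ_smul_left : ∀ (ℓ : L) (x y : V), bQ (smul ℓ x) y = ℓ * bQ x y
  nondeg : ∀ x : V, (∀ y : V, bQ x y = 0) → x = 0
  comp : ∀ x y : V, Q (mul x y) = ρ (Q x) * ρ (ρ (Q y))
  assoc1 : ∀ x y z : V, bQ (mul x y) z = ρ (bQ (mul y z) x)
  assoc2 : ∀ x y z : V, bQ (mul x y) z = ρ (ρ (bQ (mul z x) y))

/-- The cyclic shift automorphism `ρ(ℓ₁,ℓ₂,ℓ₃) = (ℓ₂,ℓ₃,ℓ₁)` of `L = F×F×F`. -/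
def cyclicShift (F : Type*) [Field F] : (F × F × F) ≃ₐ[F] (F × F × F) where
  toFun p := (p.2.1, p.2.2, p.1)
  invFun p := (p.2.2, p.1, p.2.1)
  left_inv _ := rfl
  right_inv _ := rfl
  map_mul' _ _ := rfl
  map_add' _ _ := rfl
  commutes' _ := rfl

/-- A symmetric composition algebra `(S,⋆,n)` over `F` gives a cyclic
composition algebra on `V = S×S×S` over `(L,ρ) = (F×F×F, shift)` with product
`(x₁,x₂,x₃)*(y₁,y₂,y₃) = (x₂⋆y₃, x₃⋆y₁, x₁⋆y₂)` and `Q = (n,n,n)`. -/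
theorem symmetricComp_gives_cyclicComp
    {F S : Type*} [Field F] [AddCommGroup S] [Module F S] [FiniteDimensional F S]
    (star : S →ₗ[F] S →ₗ[F] S) (n : QuadraticForm F S)
    (hnd : ∀ x : S, (∀ y : S, QuadraticMap.polar (⇑n) x y = 0) → x = 0)
    (hmult : ∀ x y : S, n (star x y) = n x * n y)
    (hassoc : ∀ x y z : S,
      QuadraticMap.polar (⇑n) (star x y) z = QuadraticMap.polar (⇑n) x (star y z)) :
    ∃ C : CyclicComp F (F × F × F) (S × S × S),
      C.ρ = cyclicShift F ∧
      (∀ (l : F × F × F) (v : S × S × S),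
        C.smul l v = (l.1 • v.1, l.2.1 • v.2.1, l.2.2 • v.2.2)) ∧
      (∀ x y : S × S × S,
        C.mul x y = (star x.2.1 y.2.2, star x.2.2 y.1, star x.1 y.2.1)) ∧
      (∀ v : S × S × S, C.Q v = (n v.1, n v.2.1, n v.2.2)) := by
  classical
  have polar_comm : ∀ a b : S, QuadraticMap.polar (⇑n) a b = QuadraticMap.polar (⇑n) b a :=
    fun a b => QuadraticMap.polar_comm (⇑n) a b
  have cyc : ∀ a b c : S,
      QuadraticMap.polar (⇑n) (star a b) c = QuadraticMap.polar (⇑n) (star b c) a := by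
    intro a b c
    rw [hassoc, polar_comm]
  refine ⟨{
    ρ := cyclicShift F
    rho_cube := fun _ => rfl
    smul := fun l v => (l.1 • v.1, l.2.1 • v.2.1, l.2.2 • v.2.2)
    smul_add := by intro l x y; simp [smul_add, Prod.ext_iff]
    add_smul := by intro l m x; simp [add_smul, Prod.ext_iff]
    mul_smul := by intro l m x; simp [mul_smul, Prod.ext_iff]
    one_smul := by intro x; simp
    mul := fun x y => (star x.2.1 y.2.2, star x.2.2 y.1, star x.1 y.2.1)
    mul_add_left := by intro x y z; simp [Prod.ext_iff]
    mul_add_right := by intro x y z; simp [Prod.ext_iff]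
    mul_smul_left := by intro l x y; simp [Prod.ext_iff, cyclicShift]; exact ⟨rfl, rfl, rfl⟩
    mul_smul_right := by intro l x y; simp [Prod.ext_iff, cyclicShift]; exact ⟨rfl, rfl, rfl⟩
    Q := fun v => (n v.1, n v.2.1, n v.2.2)
    bQ := fun x y => (QuadraticMap.polar (⇑n) x.1 y.1, QuadraticMap.polar (⇑n) x.2.1 y.2.1,
      QuadraticMap.polar (⇑n) x.2.2 y.2.2)
    bQ_def := by intro x y; rfl
    Q_smul := by
      intro l x
      simp [Prod.ext_iff, QuadraticMap.map_smul, sq, Prod.pow_def]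
    bQ_smul_left := by
      intro l x y
      simp [Prod.ext_iff, QuadraticMap.polar_smul_left]
    nondeg := by
      intro x h
      have h1 : x.1 = 0 := hnd x.1 (fun y => congrArg Prod.fst (h (y, 0, 0)))
      have h2 : x.2.1 = 0 := hnd x.2.1 (fun y => congrArg (Prod.fst ∘ Prod.snd) (h (0, y, 0)))
      have h3 : x.2.2 = 0 := hnd x.2.2 (fun y => congrArg (Prod.snd ∘ Prod.snd) (h (0, 0, y)))
      exact Prod.ext h1 (Prod.ext h2 h3)
    comp := by
      intro x y
      simp [Prod.ext_iff, cyclicShift, hmult]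
      exact ⟨rfl, rfl, rfl⟩
    assoc1 := by
      intro x y z
      exact Prod.ext (cyc _ _ _) (Prod.ext (cyc _ _ _) (cyc _ _ _))
    assoc2 := by
      intro x y z
      have h : ∀ a b c : S, QuadraticMap.polar (⇑n) (star a b) c
          = QuadraticMap.polar (⇑n) (star c a) b :=
        fun a b c => (cyc a b c).trans (cyc b c a)
      exact Prod.ext (h _ _ _) (Prod.ext (h _ _ _) (h _ _ _))
  }, rfl, fun _ _ => rfl, fun _ _ => rfl, fun _ => rfl⟩
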